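/- In a Berge-K_{1,5}-free 3-uniform hypergraph G, every non-isolated vertex v satisfies 2 ≤ |N(v)| ≤ 8 and d(v) ≤ 6; moreover, if d(v) = 6 then the link L(v) is isomorphic to K_4, and if d(v) = 5 then L(v) is isomorphic to K_4 minus one edge. -/

import Mathlib

open Finset

variable {V : Type} [DecidableEq V]

/-- A hypergraph (given by its edge set) is 3-uniform. -/
def Uniform3 (E : Finset (Finset V)) : Prop := ∀ e ∈ E, e.card = 3

/-- There is a Berge star `K_{1,m}` centered at `v`: `m` distinct leaves `y i`
and `m` distinct hyperedges `f i` with `{v, y i} ⊆ f i`. -/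
def IsBergeStar (E : Finset (Finset V)) (v : V) (m : ℕ) : Prop :=
  ∃ (y : Fin m → V) (f : Fin m → Finset V),
    Function.Injective y ∧ Function.Injective f ∧
    ∀ i, f i ∈ E ∧ v ∈ f i ∧ y i ∈ f i ∧ y i ≠ v

/-- The Berge degree of `v`: the largest `m` such that a Berge star `K_{1,m}`
centered at `v` exists. -/
noncomputable def bergeDeg (E : Finset (Finset V)) (v : V) : ℕ :=
  sSup {m | IsBergeStar E v m}

/-- The degree of `v`: the number of hyperedges containing `v`. -/
def hdeg (E : Finset (Finset V)) (v : V) : ℕ := (E.filter (fun e => v ∈ e)).card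

/-- The neighborhood of `v`: vertices sharing an edge with `v`. -/
def nbr (E : Finset (Finset V)) (v : V) : Finset V :=
  ((E.filter (fun e => v ∈ e)).biUnion id).erase v

/-- The link graph of `v`: graph on `N(v)` with `x ~ y` iff `{v,x,y} ∈ E`. -/
def linkGraph (E : Finset (Finset V)) (v : V) : SimpleGraph {x // x ∈ nbr E v} :=
  SimpleGraph.fromRel (fun a b => ({v, a.1, b.1} : Finset V) ∈ E)

/-- The number of connected components of the link graph of `v` that are trees. -/
noncomputable def treeCount (E : Finset (Finset V)) (v : V) : ℕ :=
  Nat.card {c : (linkGraph E v).ConnectedComponent //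
    ((linkGraph E v).induce c.supp).IsTree}

/-- `K_4` minus one edge (the edge between `0` and `1`). -/
def K4minus : SimpleGraph (Fin 4) :=
  SimpleGraph.fromRel (fun x y => ¬(x = 0 ∧ y = 1) ∧ ¬(x = 1 ∧ y = 0))



def SDR5 (P : Finset (Finset V)) : Prop :=
  ∃ (y : Fin 5 → V) (p : Fin 5 → Finset V),
    Function.Injective y ∧ Function.Injective p ∧ ∀ i, p i ∈ P ∧ y i ∈ p i

lemma span_le {T : Finset (Finset V)} (h2 : ∀ p ∈ T, p.card = 2) :
    T.card ≤ (T.biUnion id).card.choose 2 := by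
  have hsub : T ⊆ (T.biUnion id).powersetCard 2 := fun p hp =>
    mem_powersetCard.2 ⟨fun x hx => mem_biUnion.2 ⟨p, hp, hx⟩, h2 p hp⟩
  calc T.card ≤ ((T.biUnion id).powersetCard 2).card := card_le_card hsub
    _ = (T.biUnion id).card.choose 2 := card_powersetCard _ _

lemma sdr5_of_hall {P S : Finset (Finset V)} (hS : S ⊆ P) (h5 : S.card = 5)
    (hall : ∀ T ⊆ S, T.card ≤ (T.biUnion id).card) : SDR5 P := by
  have key : ∀ s : Finset {p // p ∈ S}, s.card ≤ (s.biUnion (fun x => x.1)).card := by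
    intro s
    have h1 : s.biUnion (fun x => x.1) = (s.image Subtype.val).biUnion id := by
      ext x; simp
    have h2 : (s.image Subtype.val).card = s.card := card_image_of_injective _ Subtype.val_injective
    rw [h1, ← h2]
    exact hall _ (by intro p hp; simp only [mem_image] at hp; obtain ⟨q, _, rfl⟩ := hp; exact q.2)
  obtain ⟨f, hfinj, hf⟩ := (Finset.all_card_le_biUnion_card_iff_exists_injective
    (fun x : {p // p ∈ S} => x.1)).1 key
  have hcard : Fintype.card {p // p ∈ S} = 5 := by
    rw [Fintype.card_coe]; exact h5
  let e := (Fintype.equivFinOfCardEq hcard).symm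
  refine ⟨f ∘ e, (fun i => (e i).1), hfinj.comp e.injective, ?_, fun i => ⟨hS (e i).2, hf (e i)⟩⟩
  intro i j hij
  exact e.injective (Subtype.ext hij)

lemma key5 {P : Finset (Finset V)} (h2 : ∀ p ∈ P, p.card = 2) (hn : ¬ SDR5 P)
    {S : Finset (Finset V)} (hS : S ⊆ P) (h5 : S.card = 5) :
    (S.biUnion id).card = 4 := by
  have hex : ∃ T ⊆ S, (T.biUnion id).card < T.card := by
    by_contra h
    push_neg at h
    exact hn (sdr5_of_hall hS h5 (fun T hT => h T hT))
  obtain ⟨T, hTS, hT⟩ := hex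
  have hspan : T.card ≤ (T.biUnion id).card.choose 2 := span_le (fun p hp => h2 p (hS (hTS hp)))
  have hT5 : T.card ≤ 5 := h5 ▸ card_le_card hTS
  set n := (T.biUnion id).card with hn'
  have hnle : n ≤ 4 := by omega
  have hn4 : n = 4 ∧ T.card = 5 := by
    interval_cases n <;> simp_all [Nat.choose] <;> omega
  have hTeqS : T = S := eq_of_subset_of_card_le hTS (by omega)
  rw [← hTeqS]; exact hn4.1

lemma four_span {T : Finset (Finset V)} (h2 : ∀ p ∈ T, p.card = 2) (h4 : T.card = 4) :
    4 ≤ (T.biUnion id).card := by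
  have := span_le h2
  by_contra h
  push_neg at h
  have : (T.biUnion id).card.choose 2 ≤ Nat.choose 3 2 :=
    Nat.choose_le_choose 2 (by omega)
  simp [Nat.choose] at this
  omega

lemma core {P : Finset (Finset V)} (h2 : ∀ p ∈ P, p.card = 2) (hn : ¬ SDR5 P)
    (h5 : 5 ≤ P.card) :
    ∃ A : Finset V, A.card = 4 ∧ P ⊆ A.powersetCard 2 ∧ P.biUnion id = A := by
  obtain ⟨S1, hS1P, hS1⟩ := exists_subset_card_eq h5
  set A := S1.biUnion id with hA
  have hAcard : A.card = 4 := key5 h2 hn hS1P hS1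
  have hPsub : P ⊆ A.powersetCard 2 := by
    intro q hq
    by_cases hqS : q ∈ S1
    · exact mem_powersetCard.2 ⟨fun x hx => mem_biUnion.2 ⟨q, hqS, hx⟩, h2 q hq⟩
    · obtain ⟨p1, hp1⟩ := card_pos.1 (by omega : 0 < S1.card)
      set S12 := S1.erase p1 with hS12
      have hq12 : q ∉ S12 := fun h => hqS (mem_of_mem_erase h)
      set S2 := insert q S12 with hS2def
      have hS2card : S2.card = 5 := by
        rw [card_insert_of_notMem hq12, card_erase_of_mem hp1, hS1]
      have hS2P : S2 ⊆ P := insert_subset hq ((erase_subset _ _).trans hS1P)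
      have hA2card : (S2.biUnion id).card = 4 := key5 h2 hn hS2P hS2card
      have h12card : S12.card = 4 := by rw [card_erase_of_mem hp1, hS1]
      have h12span : 4 ≤ (S12.biUnion id).card :=
        four_span (fun p hp => h2 p (hS1P (mem_of_mem_erase hp))) h12card
      have hsub1 : S12.biUnion id ⊆ A := biUnion_subset_biUnion_of_subset_left id (erase_subset _ _)
      have hsub2 : S12.biUnion id ⊆ S2.biUnion id :=
        biUnion_subset_biUnion_of_subset_left id (subset_insert _ _)
      have he1 : S12.biUnion id = A := eq_of_subset_of_card_le hsub1 (by omega)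
      have he2 : S12.biUnion id = S2.biUnion id := eq_of_subset_of_card_le hsub2 (by omega)
      have hqA : q ⊆ A := by
        rw [← he1, he2]
        exact fun x hx => mem_biUnion.2 ⟨q, mem_insert_self _ _, hx⟩
      exact mem_powersetCard.2 ⟨hqA, h2 q hq⟩
  refine ⟨A, hAcard, hPsub, ?_⟩
  apply Subset.antisymm
  · intro x hx
    obtain ⟨q, hqP, hxq⟩ := mem_biUnion.1 hx
    exact (mem_powersetCard.1 (hPsub hqP)).1 hxq
  · exact biUnion_subset_biUnion_of_subset_left id hS1P
section Bridge

variable (E : Finset (Finset V)) (v : V)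

def lnk : Finset (Finset V) := (E.filter (fun e => v ∈ e)).image (fun e => e.erase v)

variable {E v}

lemma mem_lnk {p : Finset V} :
    p ∈ lnk E v ↔ ∃ e ∈ E, v ∈ e ∧ e.erase v = p := by
  simp [lnk, mem_image, mem_filter, and_assoc]

lemma lnk_card2 (hU : Uniform3 E) : ∀ p ∈ lnk E v, p.card = 2 := by
  intro p hp
  obtain ⟨e, he, hve, rfl⟩ := mem_lnk.1 hp
  rw [card_erase_of_mem hve, hU e he]

lemma lnk_not_mem_v : ∀ p ∈ lnk E v, v ∉ p := by
  intro p hp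
  obtain ⟨e, he, hve, rfl⟩ := mem_lnk.1 hp
  exact notMem_erase _ _

lemma lnk_card : (lnk E v).card = hdeg E v := by
  apply card_image_of_injOn
  intro e1 h1 e2 h2 h
  have v1 : v ∈ e1 := (mem_filter.1 h1).2
  have v2 : v ∈ e2 := (mem_filter.1 h2).2
  simp only at h
  rw [← insert_erase v1, h, insert_erase v2]

lemma nbr_eq : nbr E v = (lnk E v).biUnion id := by
  ext x
  simp only [nbr, mem_erase, mem_biUnion, mem_filter, id, mem_lnk]
  constructor
  · rintro ⟨hxv, e, ⟨⟨he, hve⟩, hxe⟩⟩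
    exact ⟨e.erase v, ⟨e, he, hve, rfl⟩, mem_erase.2 ⟨hxv, hxe⟩⟩
  · rintro ⟨p, ⟨e, he, hve, rfl⟩, hxp⟩
    exact ⟨(mem_erase.1 hxp).1, e, ⟨he, hve⟩, mem_of_mem_erase hxp⟩

lemma pair_mem_lnk {x y : V} (hx : x ≠ v) (hy : y ≠ v) :
    ({x, y} : Finset V) ∈ lnk E v ↔ ({v, x, y} : Finset V) ∈ E := by
  constructor
  · intro h
    obtain ⟨e, he, hve, hp⟩ := mem_lnk.1 h
    have : insert v (e.erase v) = e := insert_erase hve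
    rw [hp] at this
    rwa [this]
  · intro h
    refine mem_lnk.2 ⟨{v, x, y}, h, mem_insert_self _ _, ?_⟩
    rw [Finset.erase_insert (by simp [Ne.symm hx, Ne.symm hy])]

lemma not_sdr5 (hfree : ∀ w : V, ¬ IsBergeStar E w 5) : ¬ SDR5 (lnk E v) := by
  rintro ⟨y, p, hy, hp, h⟩
  refine hfree v ⟨y, fun i => insert v (p i), hy, ?_, fun i => ?_⟩
  · intro i j hij
    apply hp
    have hvi : v ∉ p i := lnk_not_mem_v _ (h i).1
    have hvj : v ∉ p j := lnk_not_mem_v _ (h j).1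
    simp only at hij
    rw [← Finset.erase_insert hvi, hij, Finset.erase_insert hvj]
  · obtain ⟨e, he, hve, hp'⟩ := mem_lnk.1 (h i).1
    refine ⟨?_, mem_insert_self _ _, mem_insert_of_mem (h i).2, fun hv => ?_⟩
    · show insert v (p i) ∈ E
      rw [← hp', insert_erase hve]; exact he
    · exact lnk_not_mem_v _ (h i).1 (hv ▸ (h i).2)

lemma link_adj_iff {x y : {z // z ∈ nbr E v}} :
    (linkGraph E v).Adj x y ↔ x ≠ y ∧ ({x.1, y.1} : Finset V) ∈ lnk E v := by
  have hx : x.1 ≠ v := ne_of_mem_erase x.2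
  have hy : y.1 ≠ v := ne_of_mem_erase y.2
  have hcomm : ({v, y.1, x.1} : Finset V) = {v, x.1, y.1} := by
    ext z; simp only [mem_insert, mem_singleton]; tauto
  constructor
  · rintro ⟨hne, h | h⟩
    · exact ⟨hne, (pair_mem_lnk hx hy).2 h⟩
    · exact ⟨hne, (pair_mem_lnk hx hy).2 (hcomm ▸ h)⟩
  · rintro ⟨hne, h⟩
    exact ⟨hne, Or.inl ((pair_mem_lnk hx hy).1 h)⟩

end Bridge
lemma pair_eq_pair_iff' {x y a b : V} (hxy : x ≠ y) :
    ({x, y} : Finset V) = {a, b} ↔ (x = a ∧ y = b) ∨ (x = b ∧ y = a) := by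
  constructor
  · intro h
    have hx : x ∈ ({a, b} : Finset V) := h ▸ (by simp)
    have hy : y ∈ ({a, b} : Finset V) := h ▸ (by simp)
    simp only [mem_insert, mem_singleton] at hx hy
    rcases hx with rfl | rfl <;> rcases hy with rfl | rfl <;> tauto
  · rintro (⟨rfl, rfl⟩ | ⟨rfl, rfl⟩)
    · rfl
    · exact pair_comm _ _

lemma iso_K4 {s : Finset V} (h4 : s.card = 4) (G : SimpleGraph {x // x ∈ s})
    (hadj : ∀ x y, G.Adj x y ↔ x ≠ y) :
    Nonempty (G ≃g SimpleGraph.completeGraph (Fin 4)) := by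
  refine ⟨⟨s.equivFinOfCardEq h4, ?_⟩⟩
  intro x y
  simp only [SimpleGraph.completeGraph, SimpleGraph.top_adj, hadj, ne_eq, EmbeddingLike.apply_eq_iff_eq]

lemma K4minus_adj (i j : Fin 4) :
    K4minus.Adj i j ↔ i ≠ j ∧ ¬((i = 0 ∧ j = 1) ∨ (i = 1 ∧ j = 0)) := by
  simp only [K4minus, SimpleGraph.fromRel_adj]
  tauto

lemma cases16 {a b c d : V} (hab : a ≠ b) (hac : a ≠ c) (had : a ≠ d)
    (hbc : b ≠ c) (hbd : b ≠ d) (hcd : c ≠ d) (i j : Fin 4) :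
    (i ≠ j ∧ ({![a,b,c,d] i, ![a,b,c,d] j} : Finset V) ≠ {a,b}) ↔
      (i ≠ j ∧ ¬((i = 0 ∧ j = 1) ∨ (i = 1 ∧ j = 0))) := by
  have key : ∀ x y : V, x ≠ y → (({x, y} : Finset V) = {a, b} ↔ (x = a ∧ y = b) ∨ (x = b ∧ y = a)) :=
    fun x y h => pair_eq_pair_iff' h
  fin_cases i <;> fin_cases j <;>
    simp_all <;>
    first
      | tauto
      | (exact pair_comm _ _)
      | (rw [key _ _ (by intro hx; simp_all)]; tauto)
      | (intro hcon; rw [key _ _ (by intro hx; simp_all)] at hcon; tauto)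

lemma iso_K4minus {s : Finset V} {a b c d : V}
    (hab : a ≠ b) (hac : a ≠ c) (had : a ≠ d) (hbc : b ≠ c) (hbd : b ≠ d) (hcd : c ≠ d)
    (hs : s = {a, b, c, d}) (G : SimpleGraph {x // x ∈ s})
    (hadj : ∀ x y : {x // x ∈ s}, G.Adj x y ↔ x ≠ y ∧ ({x.1, y.1} : Finset V) ≠ {a, b}) :
    Nonempty (G ≃g K4minus) := by
  have hcard4 : s.card = 4 := by
    rw [hs, card_insert_of_notMem (by simp [hab, hac, had]),
      card_insert_of_notMem (by simp [hbc, hbd]), card_pair hcd]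
  let g : Fin 4 → {x // x ∈ s} := fun i =>
    ⟨![a, b, c, d] i, by fin_cases i <;> simp [hs]⟩
  have hginj : Function.Injective g := by
    intro i j hij
    have : (![a, b, c, d] i : V) = ![a, b, c, d] j := congrArg Subtype.val hij
    fin_cases i <;> fin_cases j <;> simp_all <;>
      first | rfl | exact absurd this (by assumption) |
        exact absurd this.symm (by assumption)
  have hbij : Function.Bijective g := by
    rw [Fintype.bijective_iff_injective_and_card]
    refine ⟨hginj, ?_⟩
    simp [Fintype.card_coe, hcard4]
  let e : Fin 4 ≃ {x // x ∈ s} := Equiv.ofBijective g hbij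
  have hmap : ∀ i j, G.Adj (e i) (e j) ↔ K4minus.Adj i j := by
    intro i j
    rw [hadj, K4minus_adj]
    have hval : ∀ i, (e i).1 = ![a, b, c, d] i := fun _ => rfl
    have hne : (e i ≠ e j) ↔ i ≠ j := by
      constructor
      · intro h hij; exact h (hij ▸ rfl)
      · exact fun h hij => h (hginj hij)
    rw [hne, hval, hval]
    exact cases16 hab hac had hbc hbd hcd i j
  exact ⟨(RelIso.mk e (fun {i j} => hmap i j) : K4minus ≃g G).symm⟩

theorem stmt9 (E : Finset (Finset V)) (hU : Uniform3 E)
    (hfree : ∀ w : V, ¬ IsBergeStar E w 5)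
    (v : V) (hv : ∃ e ∈ E, v ∈ e) :
    2 ≤ (nbr E v).card ∧ (nbr E v).card ≤ 8 ∧ hdeg E v ≤ 6 ∧
    (hdeg E v = 6 → Nonempty (linkGraph E v ≃g SimpleGraph.completeGraph (Fin 4))) ∧
    (hdeg E v = 5 → Nonempty (linkGraph E v ≃g K4minus)) := by
  classical
  have h2 := lnk_card2 (E := E) (v := v) hU
  have hSDR : ¬ SDR5 (lnk E v) := not_sdr5 hfree
  obtain ⟨e, he, hve⟩ := hv
  have heP : e.erase v ∈ lnk E v := mem_lnk.2 ⟨e, he, hve, rfl⟩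
  have hN : nbr E v = (lnk E v).biUnion id := nbr_eq
  have hPcard : (lnk E v).card = hdeg E v := lnk_card
  refine ⟨?_, ?_, ?_, ?_, ?_⟩
  · have hsub : e.erase v ⊆ nbr E v := by
      rw [hN]; exact fun x hx => mem_biUnion.2 ⟨_, heP, hx⟩
    calc 2 = (e.erase v).card := (h2 _ heP).symm
      _ ≤ _ := card_le_card hsub
  · by_cases h5 : 5 ≤ (lnk E v).card
    · obtain ⟨A, hA4, _, hPA⟩ := core h2 hSDR h5
      rw [hN, hPA, hA4]; omega
    · rw [hN]
      calc ((lnk E v).biUnion id).card ≤ ∑ p ∈ lnk E v, p.card := card_biUnion_le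
        _ = (lnk E v).card * 2 := sum_const_nat h2
        _ ≤ 8 := by omega
  · rw [← hPcard]
    by_contra h
    obtain ⟨A, hA4, hPA, _⟩ := core h2 hSDR (by omega)
    have hle := card_le_card hPA
    rw [card_powersetCard, hA4] at hle
    simp [Nat.choose] at hle
    omega
  · intro h6
    have hc : (lnk E v).card = 6 := by rw [hPcard]; exact h6
    obtain ⟨A, hA4, hPA, hUA⟩ := core h2 hSDR (by omega)
    have hPeq : lnk E v = A.powersetCard 2 := by
      apply eq_of_subset_of_card_le hPA
      rw [card_powersetCard, hA4, hc]
      simp [Nat.choose]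
    have hNcard : (nbr E v).card = 4 := by rw [hN, hUA, hA4]
    apply iso_K4 hNcard
    intro x y
    rw [link_adj_iff]
    constructor
    · exact fun h => h.1
    · intro hxy
      have hxy1 : x.1 ≠ y.1 := fun h => hxy (Subtype.ext h)
      refine ⟨hxy, ?_⟩
      rw [hPeq]
      refine mem_powersetCard.2 ⟨?_, card_pair hxy1⟩
      have hxA : x.1 ∈ A := by rw [← hUA, ← hN]; exact x.2
      have hyA : y.1 ∈ A := by rw [← hUA, ← hN]; exact y.2
      exact insert_subset hxA (singleton_subset_iff.2 hyA)
  · intro h5d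
    have hc : (lnk E v).card = 5 := by rw [hPcard]; exact h5d
    obtain ⟨A, hA4, hPA, hUA⟩ := core h2 hSDR (by omega)
    have hnbrA : nbr E v = A := by rw [hN, hUA]
    have hdc : ((A.powersetCard 2) \ lnk E v).card = 1 := by
      rw [card_sdiff_of_subset hPA, card_powersetCard, hA4, hc]
      simp [Nat.choose]
    obtain ⟨m, hm⟩ := card_eq_one.1 hdc
    have hmmem : m ∈ A.powersetCard 2 ∧ m ∉ lnk E v := by
      have := hm ▸ mem_singleton_self m
      exact mem_sdiff.1 this
    have hPeq : lnk E v = (A.powersetCard 2) \ {m} := by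
      rw [← hm, sdiff_sdiff_right_self, inf_eq_inter]
      exact (inter_eq_right.2 hPA).symm
    obtain ⟨hmA, hm2⟩ := mem_powersetCard.1 hmmem.1
    obtain ⟨a, b, hab, hmab⟩ := card_eq_two.1 hm2
    have hAm2 : (A \ m).card = 2 := by rw [card_sdiff_of_subset hmA, hA4, hm2]
    obtain ⟨c, d, hcd, hcdeq⟩ := card_eq_two.1 hAm2
    have hcm : c ∉ m := (mem_sdiff.1 (hcdeq ▸ mem_insert_self c {d})).2
    have hdm : d ∉ m := (mem_sdiff.1 (hcdeq ▸ mem_insert_of_mem (mem_singleton_self d))).2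
    have hac : a ≠ c := fun h => hcm (hmab ▸ (h ▸ mem_insert_self a {b}))
    have had : a ≠ d := fun h => hdm (hmab ▸ (h ▸ mem_insert_self a {b}))
    have hbc : b ≠ c := fun h => hcm (hmab ▸ (h ▸ mem_insert_of_mem (mem_singleton_self b)))
    have hbd : b ≠ d := fun h => hdm (hmab ▸ (h ▸ mem_insert_of_mem (mem_singleton_self b)))
    have hAeq : nbr E v = {a, b, c, d} := by
      have hAu : A = m ∪ (A \ m) := by
        ext z
        simp only [mem_union, mem_sdiff]
        tauto
      rw [hnbrA, hAu, hcdeq, hmab]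
      ext z; simp only [mem_union, mem_insert, mem_singleton]; tauto
    apply iso_K4minus hab hac had hbc hbd hcd hAeq
    intro x y
    rw [link_adj_iff]
    have hxA : x.1 ∈ A := by rw [← hnbrA]; exact x.2
    have hyA : y.1 ∈ A := by rw [← hnbrA]; exact y.2
    constructor
    · rintro ⟨hxy, hmem⟩
      refine ⟨hxy, fun hpair => ?_⟩
      rw [hPeq, mem_sdiff, mem_singleton] at hmem
      exact hmem.2 (hpair.trans hmab.symm)
    · rintro ⟨hxy, hpair⟩
      have hxy1 : x.1 ≠ y.1 := fun h => hxy (Subtype.ext h)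
      refine ⟨hxy, ?_⟩
      rw [hPeq, mem_sdiff, mem_singleton]
      refine ⟨mem_powersetCard.2 ⟨insert_subset hxA (singleton_subset_iff.2 hyA),
        card_pair hxy1⟩, fun h => hpair (h.trans hmab)⟩
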